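/- arXiv:1509.01912 — 6 statements merged into one kernel-verified Lean document; each statement's English description precedes it below -/
import Mathlib

section
/- Let S be a compact subset of a Banach space X and let {T_k} be a sequence of maps from S into S such that each T_k satisfies ‖T_k(x) − T_k(y)‖ ≤ ρ‖x − y‖ for all x, y ∈ S with a common ρ ∈ [0,1), and T_k converges uniformly on S to a map T_∞ : S → S which is also a ρ-contraction. Then for any initial point x_1 ∈ S, the sequence defined by x_{k+1} = T_k(x_k) converges to the unique fixed point x* ∈ S of T_∞, and this limit is independent of the initial point x_1. -/
open Filter

/-- k-dependent contraction mapping theorem: the iterates x_{k+1} = T_k(x_k) converge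
to the unique fixed point of T_∞, independently of the initial point. -/
theorem stmt_2 {X : Type*} [NormedAddCommGroup X] [NormedSpace ℝ X] [CompleteSpace X]
    (S : Set X) (hS : IsCompact S) (hSne : S.Nonempty)
    (T : ℕ → X → X) (Tinf : X → X) (ρ : ℝ) (hρ0 : 0 ≤ ρ) (hρ1 : ρ < 1)
    (hmaps : ∀ k, Set.MapsTo (T k) S S) (hmapsinf : Set.MapsTo Tinf S S)
    (hcontr : ∀ k, ∀ x ∈ S, ∀ y ∈ S, ‖T k x - T k y‖ ≤ ρ * ‖x - y‖)
    (hcontrinf : ∀ x ∈ S, ∀ y ∈ S, ‖Tinf x - Tinf y‖ ≤ ρ * ‖x - y‖)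
    (hunif : ∀ ε > 0, ∃ N, ∀ k ≥ N, ∀ x ∈ S, ‖T k x - Tinf x‖ ≤ ε) :
    ∃ xstar ∈ S, Tinf xstar = xstar ∧
      (∀ y ∈ S, Tinf y = y → y = xstar) ∧
      (∀ x : ℕ → X, x 0 ∈ S → (∀ k, x (k + 1) = T k (x k)) →
        Tendsto x atTop (nhds xstar)) := by
  -- fixed point via contraction on subtype S
  haveI : Nonempty S := hSne.to_subtype
  haveI : CompleteSpace S := hS.isClosed.completeSpace_coe
  set f : S → S := hmapsinf.restrict Tinf S S with hf
  have hcf : ContractingWith ⟨ρ, hρ0⟩ f := by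
    constructor
    · exact_mod_cast hρ1
    · apply LipschitzWith.of_dist_le_mul
      intro a b
      simp only [Subtype.dist_eq, dist_eq_norm]
      exact hcontrinf a a.2 b b.2
  set p := ContractingWith.fixedPoint f hcf with hpdef
  have hp : f p = p := hcf.fixedPoint_isFixedPt
  refine ⟨(p : X), p.2, ?_, ?_, ?_⟩
  · have := congrArg (Subtype.val) hp
    exact this
  · -- uniqueness
    intro y hy hyfix
    by_contra hne
    have hpos : 0 < ‖y - (p : X)‖ := by
      rw [norm_pos_iff, sub_ne_zero]; exact hne
    have hfixp : Tinf (p : X) = (p : X) := congrArg Subtype.val hp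
    have := hcontrinf y hy (p : X) p.2
    rw [hyfix, hfixp] at this
    nlinarith
  · intro x hx0 hrec
    have hfixp : Tinf (p : X) = (p : X) := congrArg Subtype.val hp
    have hxS : ∀ k, x k ∈ S := by
      intro k; induction k with
      | zero => exact hx0
      | succ n ih => rw [hrec n]; exact hmaps n ih
    -- recursive estimate
    have key : ∀ k, ∀ c > 0, (∀ j ≥ k, ∀ z ∈ S, ‖T j z - Tinf z‖ ≤ c) →
        ∀ m, ‖x (k + m) - (p : X)‖ ≤ ρ ^ m * ‖x k - (p : X)‖ + c / (1 - ρ) := by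
      intro k c hc hbd m
      induction m with
      | zero =>
        have hd : 0 ≤ c / (1 - ρ) := div_nonneg hc.le (by linarith)
        simp only [add_zero, pow_zero, one_mul]
        linarith
      | succ n ih =>
        have h1 : ‖x (k + n + 1) - (p : X)‖ ≤ ρ * ‖x (k + n) - (p : X)‖ + c := by
          rw [hrec (k + n)]
          calc ‖T (k+n) (x (k+n)) - (p:X)‖
              ≤ ‖T (k+n) (x (k+n)) - Tinf (x (k+n))‖ + ‖Tinf (x (k+n)) - (p:X)‖ := by
                have := norm_sub_le_norm_sub_add_norm_sub (T (k+n) (x (k+n))) (Tinf (x (k+n))) (p:X)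
                linarith [this]
            _ ≤ c + ρ * ‖x (k+n) - (p:X)‖ := by
                have h2 := hbd (k+n) (Nat.le_add_right k n) (x (k+n)) (hxS (k+n))
                have h3 := hcontrinf (x (k+n)) (hxS (k+n)) (p:X) p.2
                rw [hfixp] at h3
                linarith
            _ = ρ * ‖x (k+n) - (p:X)‖ + c := by ring
        have : k + (n + 1) = k + n + 1 := by ring
        rw [this]
        have hne : (1 : ℝ) - ρ ≠ 0 := by linarith
        have hρ' : ρ * (c / (1 - ρ)) + c = c / (1 - ρ) := by
          field_simp
          ring
        calc ‖x (k+n+1) - (p:X)‖ ≤ ρ * ‖x (k+n) - (p:X)‖ + c := h1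
          _ ≤ ρ * (ρ ^ n * ‖x k - (p:X)‖ + c / (1 - ρ)) + c := by nlinarith
          _ = ρ ^ (n+1) * ‖x k - (p:X)‖ + (ρ * (c / (1-ρ)) + c) := by ring
          _ = ρ ^ (n+1) * ‖x k - (p:X)‖ + c / (1 - ρ) := by rw [hρ']
    rw [Metric.tendsto_atTop]
    intro ε hε
    obtain ⟨N, hN⟩ := hunif (ε * (1 - ρ) / 4) (by nlinarith)
    have hne : (1 : ℝ) - ρ ≠ 0 := by linarith
    have hc : (ε * (1 - ρ) / 4) / (1 - ρ) = ε / 4 := by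
      field_simp
    have hpow : Tendsto (fun m : ℕ => ρ ^ m * ‖x N - (p : X)‖) atTop (nhds 0) := by
      have := tendsto_pow_atTop_nhds_zero_of_lt_one hρ0 hρ1
      simpa using this.mul_const ‖x N - (p : X)‖
    obtain ⟨M, hM⟩ := (Metric.tendsto_atTop.mp hpow) (ε / 4) (by linarith)
    refine ⟨N + M, fun n hn => ?_⟩
    obtain ⟨m, rfl⟩ := Nat.exists_eq_add_of_le (le_trans (Nat.le_add_right N M) hn)
    have hmM : M ≤ m := by omega
    have h1 := key N (ε * (1 - ρ) / 4) (by nlinarith) (fun j hj z hz => hN j hj z hz) m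
    rw [hc] at h1
    have h2 := hM m hmM
    rw [Real.dist_eq, sub_zero, abs_of_nonneg (by positivity)] at h2
    rw [dist_eq_norm]
    linarith
end

section
/- Let S be a compact subset of a Banach space X and {T_k} a sequence of self-maps of S that are ρ-contractions with a common ρ ∈ [0,1) and that converge uniformly to T_∞ : S → S. If x_{k+1} = T_k(x_k) with x_1 ∈ S, then {x_k} is a Cauchy sequence. -/
/-- Under a sequence of uniformly convergent ρ-contractions on a compact subset of a
Banach space, the iterates x_{k+1} = T_k(x_k) form a Cauchy sequence. -/
theorem stmt_3 {X : Type*} [NormedAddCommGroup X] [NormedSpace ℝ X] [CompleteSpace X]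
    (S : Set X) (hS : IsCompact S)
    (T : ℕ → X → X) (Tinf : X → X) (ρ : ℝ) (hρ0 : 0 ≤ ρ) (hρ1 : ρ < 1)
    (hmaps : ∀ k, Set.MapsTo (T k) S S) (hmapsinf : Set.MapsTo Tinf S S)
    (hcontr : ∀ k, ∀ x ∈ S, ∀ y ∈ S, ‖T k x - T k y‖ ≤ ρ * ‖x - y‖)
    (hunif : ∀ ε > 0, ∃ N, ∀ k ≥ N, ∀ x ∈ S, ‖T k x - Tinf x‖ ≤ ε)
    (x : ℕ → X) (hx0 : x 0 ∈ S) (hxrec : ∀ k, x (k + 1) = T k (x k)) :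
    CauchySeq x := by
  -- membership
  have hmem : ∀ k, x k ∈ S := by
    intro k
    induction k with
    | zero => exact hx0
    | succ n ih => rw [hxrec]; exact hmaps n ih
  -- Tinf is a ρ-contraction on S
  have hcinf : ∀ a ∈ S, ∀ b ∈ S, ‖Tinf a - Tinf b‖ ≤ ρ * ‖a - b‖ := by
    intro a ha b hb
    refine le_of_forall_pos_le_add (fun ε hε => ?_)
    obtain ⟨N, hN⟩ := hunif (ε / 2) (by positivity)
    have h1 := hN N le_rfl a ha
    have h2 := hN N le_rfl b hb
    have h3 := hcontr N a ha b hb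
    have : ‖Tinf a - Tinf b‖ ≤ ‖Tinf a - T N a‖ + ‖T N a - T N b‖ + ‖T N b - Tinf b‖ := by
      have := norm_add₃_le (a := Tinf a - T N a) (b := T N a - T N b) (c := T N b - Tinf b)
      simpa using this
    rw [norm_sub_rev] at h1
    linarith
  -- fixed point of Tinf in S
  haveI : CompleteSpace S := hS.isClosed.completeSpace_coe
  haveI : Nonempty S := ⟨⟨x 0, hx0⟩⟩
  set f : S → S := hmapsinf.restrict Tinf S S with hf
  have hlip : LipschitzWith ⟨ρ, hρ0⟩ f := by
    apply LipschitzWith.of_dist_le_mul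
    intro a b
    simp only [Subtype.dist_eq, dist_eq_norm]
    exact hcinf a a.2 b b.2
  have hcw : ContractingWith ⟨ρ, hρ0⟩ f := ⟨by exact_mod_cast hρ1, hlip⟩
  set y : S := hcw.fixedPoint f with hy
  have hfix : Tinf (y : X) = (y : X) := by
    have := hcw.fixedPoint_isFixedPt
    exact congrArg Subtype.val this
  -- bound
  obtain ⟨R, hR⟩ := hS.isBounded.exists_norm_le
  set C : ℝ := 2 * R + 1 with hC
  have hR0 : 0 ≤ R := le_trans (norm_nonneg _) (hR _ hx0)
  have hC0 : 0 < C := by positivity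
  have hbound : ∀ k, ‖x k - (y : X)‖ ≤ C := by
    intro k
    calc ‖x k - (y : X)‖ ≤ ‖x k‖ + ‖(y : X)‖ := norm_sub_le _ _
      _ ≤ R + R := add_le_add (hR _ (hmem k)) (hR _ y.2)
      _ ≤ C := by simp [hC]; linarith
  have h1ρ : 0 < 1 - ρ := by linarith
  -- key estimate
  have key : ∀ δ > 0, ∀ N, (∀ k ≥ N, ∀ z ∈ S, ‖T k z - Tinf z‖ ≤ δ) →
      ∀ m, ‖x (N + m) - (y : X)‖ ≤ ρ ^ m * C + δ / (1 - ρ) := by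
    intro δ hδ N hN m
    induction m with
    | zero =>
      simp only [Nat.add_zero, pow_zero, one_mul]
      have : 0 ≤ δ / (1 - ρ) := by positivity
      linarith [hbound N]
    | succ n ih =>
      have hstep : ‖x (N + n + 1) - (y : X)‖ ≤ ρ * ‖x (N + n) - (y : X)‖ + δ := by
        rw [hxrec]
        calc ‖T (N + n) (x (N + n)) - (y : X)‖
            ≤ ‖T (N + n) (x (N + n)) - T (N + n) (y : X)‖ + ‖T (N + n) (y : X) - (y : X)‖ := by
              simpa using norm_sub_le_norm_sub_add_norm_sub _ (T (N + n) (y : X)) _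
          _ ≤ ρ * ‖x (N + n) - (y : X)‖ + δ := by
              refine add_le_add (hcontr _ _ (hmem _) _ y.2) ?_
              have := hN (N + n) (Nat.le_add_right _ _) (y : X) y.2
              rwa [hfix] at this
      have : ρ * (ρ ^ n * C + δ / (1 - ρ)) + δ = ρ ^ (n + 1) * C + δ / (1 - ρ) := by
        field_simp
        ring
      have h2 : ρ * ‖x (N + n) - (y : X)‖ + δ ≤ ρ ^ (n + 1) * C + δ / (1 - ρ) := by
        rw [← this]
        have := mul_le_mul_of_nonneg_left ih hρ0
        linarith
      calc ‖x (N + n + 1) - (y : X)‖ ≤ ρ * ‖x (N + n) - (y : X)‖ + δ := hstep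
        _ ≤ _ := h2
  -- convergence to y
  have htend : Filter.Tendsto x Filter.atTop (nhds (y : X)) := by
    rw [Metric.tendsto_atTop]
    intro ε hε
    set δ : ℝ := ε * (1 - ρ) / 4 with hδ
    have hδ0 : 0 < δ := by positivity
    obtain ⟨N, hN⟩ := hunif δ hδ0
    obtain ⟨m, hm⟩ : ∃ m, ρ ^ m * C < ε / 4 := by
      have : Filter.Tendsto (fun m => ρ ^ m * C) Filter.atTop (nhds (0 * C)) :=
        (tendsto_pow_atTop_nhds_zero_of_lt_one hρ0 hρ1).mul_const C
      rw [zero_mul] at this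
      have := (this.eventually (eventually_lt_nhds (show (0:ℝ) < ε / 4 by positivity))).exists
      exact this
    refine ⟨N + m, fun k hk => ?_⟩
    have hkN : N ≤ k := le_trans (Nat.le_add_right _ _) hk
    obtain ⟨j, rfl⟩ := Nat.exists_eq_add_of_le hkN
    have hjm : m ≤ j := by omega
    have h1 : ρ ^ j * C ≤ ρ ^ m * C :=
      mul_le_mul_of_nonneg_right (pow_le_pow_of_le_one hρ0 hρ1.le hjm) hC0.le
    have h2 : δ / (1 - ρ) = ε / 4 := by
      rw [hδ]; field_simp
    have := key δ hδ0 N hN j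
    rw [dist_eq_norm]
    calc ‖x (N + j) - (y : X)‖ ≤ ρ ^ j * C + δ / (1 - ρ) := this
      _ ≤ ρ ^ m * C + ε / 4 := by rw [h2]; exact add_le_add h1 le_rfl
      _ < ε := by linarith
  exact htend.cauchySeq
end

section
/- Let Γ > 0 be a scalar, β ∈ (0,1), λ > 0, and define the linear operator T on continuous functions x : [0,L] → ℝ by T(x)(t) = (1−β)x(t) − (1−β)e^{−Γt} ∫_0^t e^{Γs} Γ x(s) ds. Then for all continuous x, y : [0,L] → ℝ, ‖T(x) − T(y)‖_λ ≤ (1−β)(1 + Γ/(Γ+λ)) ‖x − y‖_λ. -/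
set_option maxHeartbeats 1000000


open Set intervalIntegral

lemma int_exp_aux (c : ℝ) (hc : c ≠ 0) (t : ℝ) :
    ∫ s in (0:ℝ)..t, Real.exp (c * s) = (Real.exp (c * t) - 1) / c := by
  have hderiv : ∀ s : ℝ, HasDerivAt (fun u => Real.exp (c * u) / c) (Real.exp (c * s)) s := by
    intro s
    have h1 : HasDerivAt (fun u : ℝ => c * u) c s := by
      simpa using (hasDerivAt_id s).const_mul c
    have h2 : HasDerivAt (fun u : ℝ => Real.exp (c * u)) (Real.exp (c * s) * c) s :=
      (Real.hasDerivAt_exp (c * s)).comp s h1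
    have := h2.div_const c
    simpa [mul_div_assoc, mul_div_cancel_right₀ _ hc] using this
  have hint : IntervalIntegrable (fun s => Real.exp (c * s)) MeasureTheory.volume 0 t :=
    (Real.continuous_exp.comp (continuous_const.mul continuous_id)).intervalIntegrable 0 t
  have := intervalIntegral.integral_eq_sub_of_hasDerivAt (fun s _ => hderiv s) hint
  rw [this]
  simp [sub_div]

/-- The contraction estimate for the I-type ILC operator in the λ-norm:
‖T(x) − T(y)‖_λ ≤ (1−β)(1 + Γ/(Γ+λ)) ‖x − y‖_λ. -/
theorem stmt_5 (L Γ β l : ℝ) (hL : 0 < L) (hΓ : 0 < Γ) (hβ0 : 0 < β) (hβ1 : β < 1)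
    (hl : 0 < l)
    (T : (ℝ → ℝ) → (ℝ → ℝ))
    (hT : ∀ x : ℝ → ℝ, ∀ t : ℝ,
      T x t = (1 - β) * x t
        - (1 - β) * Real.exp (-Γ * t) * ∫ s in (0:ℝ)..t, Real.exp (Γ * s) * Γ * x s)
    (x y : ℝ → ℝ) (hx : ContinuousOn x (Icc 0 L)) (hy : ContinuousOn y (Icc 0 L)) :
    (⨆ t : Icc (0:ℝ) L, Real.exp (-l * t) * |T x t - T y t|) ≤
      (1 - β) * (1 + Γ / (Γ + l)) *
        (⨆ t : Icc (0:ℝ) L, Real.exp (-l * t) * |x t - y t|) := by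
  have hβ : (0:ℝ) ≤ 1 - β := by linarith
  have hΓl : 0 < Γ + l := by linarith
  have hdc : ContinuousOn (fun s => x s - y s) (Icc 0 L) := hx.sub hy
  have h0L : (0:ℝ) ∈ Icc (0:ℝ) L := ⟨le_refl 0, hL.le⟩
  have hne : Nonempty (Icc (0:ℝ) L) := ⟨⟨0, h0L⟩⟩
  have hcont : ContinuousOn (fun t => Real.exp (-l * t) * |x t - y t|) (Icc 0 L) :=
    ((Real.continuous_exp.comp (continuous_const.mul continuous_id)).continuousOn).mul hdc.abs
  obtain ⟨C, hC⟩ := isCompact_Icc.exists_bound_of_continuousOn hcont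
  have hbdd : BddAbove (Set.range fun t : Icc (0:ℝ) L =>
      Real.exp (-l * (t:ℝ)) * |x t - y t|) := by
    refine ⟨C, ?_⟩
    rintro _ ⟨s, rfl⟩
    have h := hC (s:ℝ) s.2
    rw [Real.norm_eq_abs] at h
    exact (le_abs_self _).trans h
  set M := ⨆ t : Icc (0:ℝ) L, Real.exp (-l * (t:ℝ)) * |x t - y t| with hMdef
  have hMle : ∀ s : Icc (0:ℝ) L, Real.exp (-l * (s:ℝ)) * |x s - y s| ≤ M :=
    fun s => le_ciSup hbdd s
  have hM0 : 0 ≤ M := le_trans (by positivity) (hMle ⟨0, h0L⟩)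
  have hdle : ∀ s ∈ Icc (0:ℝ) L, |x s - y s| ≤ M * Real.exp (l * s) := by
    intro s hs
    have h1 := hMle ⟨s, hs⟩
    simp only at h1
    have h2 : Real.exp (-l * s) * Real.exp (l * s) = 1 := by
      rw [← Real.exp_add]; ring_nf; exact Real.exp_zero
    nlinarith [Real.exp_pos (l * s), Real.exp_pos (-l * s), abs_nonneg (x s - y s)]
  apply ciSup_le
  rintro ⟨t, ht⟩
  simp only
  have ht0 : 0 ≤ t := ht.1
  have htL : t ≤ L := ht.2
  have hsub : Icc (0:ℝ) t ⊆ Icc 0 L := Icc_subset_Icc le_rfl htL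
  have huIcc : uIcc (0:ℝ) t = Icc 0 t := uIcc_of_le ht0
  have hcx : ContinuousOn (fun s => Real.exp (Γ * s) * Γ * x s) (uIcc 0 t) := by
    rw [huIcc]
    exact (((Real.continuous_exp.comp (continuous_const.mul continuous_id)).mul
      continuous_const).continuousOn).mul (hx.mono hsub)
  have hcy : ContinuousOn (fun s => Real.exp (Γ * s) * Γ * y s) (uIcc 0 t) := by
    rw [huIcc]
    exact (((Real.continuous_exp.comp (continuous_const.mul continuous_id)).mul
      continuous_const).continuousOn).mul (hy.mono hsub)
  have hix : IntervalIntegrable (fun s => Real.exp (Γ * s) * Γ * x s) MeasureTheory.volume 0 t :=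
    hcx.intervalIntegrable
  have hiy : IntervalIntegrable (fun s => Real.exp (Γ * s) * Γ * y s) MeasureTheory.volume 0 t :=
    hcy.intervalIntegrable
  have hid : IntervalIntegrable (fun s => Real.exp (Γ * s) * Γ * (x s - y s))
      MeasureTheory.volume 0 t := by
    have := hix.sub hiy
    convert this using 1
    ext s; ring
  have hTd : T x t - T y t = (1 - β) * (x t - y t)
      - (1 - β) * Real.exp (-Γ * t) * ∫ s in (0:ℝ)..t, Real.exp (Γ * s) * Γ * (x s - y s) := by
    rw [hT x t, hT y t]
    have heq : (∫ s in (0:ℝ)..t, Real.exp (Γ * s) * Γ * (x s - y s))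
        = (∫ s in (0:ℝ)..t, Real.exp (Γ * s) * Γ * x s)
          - ∫ s in (0:ℝ)..t, Real.exp (Γ * s) * Γ * y s := by
      rw [← intervalIntegral.integral_sub hix hiy]
      congr 1; ext s; ring
    rw [heq]; ring
  -- bound the integral
  have hintbound : |∫ s in (0:ℝ)..t, Real.exp (Γ * s) * Γ * (x s - y s)|
      ≤ Γ * M * ((Real.exp ((Γ + l) * t) - 1) / (Γ + l)) := by
    have h1 : |∫ s in (0:ℝ)..t, Real.exp (Γ * s) * Γ * (x s - y s)|
        ≤ ∫ s in (0:ℝ)..t, |Real.exp (Γ * s) * Γ * (x s - y s)| :=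
      intervalIntegral.abs_integral_le_integral_abs ht0
    have h2 : (∫ s in (0:ℝ)..t, |Real.exp (Γ * s) * Γ * (x s - y s)|)
        ≤ ∫ s in (0:ℝ)..t, Γ * M * Real.exp ((Γ + l) * s) := by
      apply intervalIntegral.integral_mono_on ht0
      · exact hid.abs
      · exact (Continuous.intervalIntegrable (by continuity) 0 t)
      · intro s hs
        have hds := hdle s (hsub hs)
        have he : Real.exp ((Γ + l) * s) = Real.exp (Γ * s) * Real.exp (l * s) := by
          rw [← Real.exp_add]; ring_nf
        rw [abs_mul, abs_mul, abs_of_pos (Real.exp_pos _), abs_of_pos hΓ, he]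
        have := mul_le_mul_of_nonneg_left hds
          (by positivity : (0:ℝ) ≤ Real.exp (Γ * s) * Γ)
        nlinarith [this]
    have h3 : (∫ s in (0:ℝ)..t, Γ * M * Real.exp ((Γ + l) * s))
        = Γ * M * ((Real.exp ((Γ + l) * t) - 1) / (Γ + l)) := by
      rw [intervalIntegral.integral_const_mul, int_exp_aux (Γ + l) (ne_of_gt hΓl) t]
    linarith
  -- pointwise estimate
  have habs : |T x t - T y t| ≤ (1 - β) * |x t - y t|
      + (1 - β) * Real.exp (-Γ * t) * (Γ * M * ((Real.exp ((Γ + l) * t) - 1) / (Γ + l))) := by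
    rw [hTd]
    refine le_trans (abs_sub _ _) ?_
    have e1 : |(1 - β) * (x t - y t)| = (1 - β) * |x t - y t| := by
      rw [abs_mul, abs_of_nonneg hβ]
    have e2 : |(1 - β) * Real.exp (-Γ * t) *
        ∫ s in (0:ℝ)..t, Real.exp (Γ * s) * Γ * (x s - y s)|
        = (1 - β) * Real.exp (-Γ * t) *
          |∫ s in (0:ℝ)..t, Real.exp (Γ * s) * Γ * (x s - y s)| := by
      rw [abs_mul, abs_mul, abs_of_nonneg hβ, abs_of_pos (Real.exp_pos _)]
    rw [e1, e2]
    have : (0:ℝ) ≤ (1 - β) * Real.exp (-Γ * t) := by positivity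
    nlinarith [mul_le_mul_of_nonneg_left hintbound this]
  have hterm1 : Real.exp (-l * t) * |x t - y t| ≤ M := hMle ⟨t, ht⟩
  have hkey : Real.exp (-l * t) * Real.exp (-Γ * t) * (Real.exp ((Γ + l) * t) - 1)
      ≤ 1 := by
    have h1 : Real.exp (-l * t) * Real.exp (-Γ * t) = Real.exp (-(Γ + l) * t) := by
      rw [← Real.exp_add]; ring_nf
    have h2 : Real.exp (-(Γ + l) * t) * Real.exp ((Γ + l) * t) = 1 := by
      rw [← Real.exp_add]; ring_nf; exact Real.exp_zero
    rw [h1]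
    nlinarith [Real.exp_pos (-(Γ + l) * t)]
  have hexppos := Real.exp_pos (-l * t)
  have hB : (0:ℝ) ≤ (1 - β) * (Γ * M / (Γ + l)) := by positivity
  have e2 : Real.exp (-l * t) *
      ((1 - β) * Real.exp (-Γ * t) * (Γ * M * ((Real.exp ((Γ + l) * t) - 1) / (Γ + l))))
      ≤ (1 - β) * (Γ * M / (Γ + l)) := by
    have hrw : Real.exp (-l * t) *
        ((1 - β) * Real.exp (-Γ * t) * (Γ * M * ((Real.exp ((Γ + l) * t) - 1) / (Γ + l))))
        = (1 - β) * (Γ * M / (Γ + l)) *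
          (Real.exp (-l * t) * Real.exp (-Γ * t) * (Real.exp ((Γ + l) * t) - 1)) := by
      field_simp
    rw [hrw]
    nlinarith [hkey, hB]
  have e1 : Real.exp (-l * t) * ((1 - β) * |x t - y t|) ≤ (1 - β) * M := by
    have : Real.exp (-l * t) * ((1 - β) * |x t - y t|)
        = (1 - β) * (Real.exp (-l * t) * |x t - y t|) := by ring
    rw [this]
    exact mul_le_mul_of_nonneg_left hterm1 hβ
  have hmain : Real.exp (-l * t) * |T x t - T y t|
      ≤ (1 - β) * M + (1 - β) * (Γ * M / (Γ + l)) := by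
    have := mul_le_mul_of_nonneg_left habs hexppos.le
    rw [mul_add] at this
    linarith
  have hfin : (1 - β) * M + (1 - β) * (Γ * M / (Γ + l))
      = (1 - β) * (1 + Γ / (Γ + l)) * M := by field_simp
  linarith
end

section
/- Let Γ > 0, λ > 0, L > 0, and suppose y_k : [0,L] → ℝ are continuously differentiable functions with y_k(0) = 0 satisfying ẏ_k(t) = ẏ_{k−1}(t) − Γ y_k(t). Define J_k = ∫_0^L e^{−λt} (ẏ_k(t))^2 dt. Then J_k − J_{k−1} ≤ −(Γ^2 + λΓ) ∫_0^L e^{−λt} y_k(t)^2 dt; in particular {J_k} is non-increasing. -/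
open Set

/-- Monotonicity of the weighted energy J_k for the β = 0 ILC recursion
ẏ_k = ẏ_{k−1} − Γ y_k:
J_k − J_{k−1} ≤ −(Γ² + λΓ) ∫₀ᴸ e^{−λt} y_k(t)² dt, so {J_k} is non-increasing. -/
theorem stmt_10 (L Γ l : ℝ) (hL : 0 < L) (hΓ : 0 < Γ) (hl : 0 < l)
    (y y' : ℕ → ℝ → ℝ)
    (hderiv : ∀ k t, HasDerivAt (y k) (y' k t) t)
    (hcont : ∀ k, Continuous (y' k))
    (hinit : ∀ k, y k 0 = 0)
    (hrec : ∀ k, 1 ≤ k → ∀ t ∈ Icc (0:ℝ) L, y' k t = y' (k - 1) t - Γ * y k t)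
    (J : ℕ → ℝ)
    (hJ : ∀ k, J k = ∫ t in (0:ℝ)..L, Real.exp (-l * t) * (y' k t) ^ 2) :
    ∀ k, 1 ≤ k →
      J k - J (k - 1) ≤
        -(Γ ^ 2 + l * Γ) * ∫ t in (0:ℝ)..L, Real.exp (-l * t) * (y k t) ^ 2 ∧
      J k ≤ J (k - 1) := by
  intro k hk
  have hcy : ∀ m, Continuous (y m) :=
    fun m => continuous_iff_continuousAt.2 fun t => (hderiv m t).continuousAt
  have hce : Continuous fun t : ℝ => Real.exp (-l * t) :=
    Real.continuous_exp.comp (continuous_const.mul continuous_id)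
  set C : ℝ := ∫ t in (0:ℝ)..L, Real.exp (-l * t) * (y k t) ^ 2 with hCdef
  set B : ℝ := ∫ t in (0:ℝ)..L, Real.exp (-l * t) * (y k t * y' k t) with hBdef
  have hC0 : 0 ≤ C := intervalIntegral.integral_nonneg hL.le fun t _ =>
    mul_nonneg (Real.exp_pos _).le (sq_nonneg _)
  have hiC : IntervalIntegrable (fun t => Real.exp (-l * t) * (y k t) ^ 2)
      MeasureTheory.volume 0 L := (hce.mul ((hcy k).pow 2)).intervalIntegrable _ _
  have hiB : IntervalIntegrable (fun t => Real.exp (-l * t) * (y k t * y' k t))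
      MeasureTheory.volume 0 L := (hce.mul ((hcy k).mul (hcont k))).intervalIntegrable _ _
  have hiA : IntervalIntegrable (fun t => Real.exp (-l * t) * (y' k t) ^ 2)
      MeasureTheory.volume 0 L := (hce.mul ((hcont k).pow 2)).intervalIntegrable _ _
  -- integration by parts
  have hF : ∀ t : ℝ, HasDerivAt (fun s => Real.exp (-l * s) * (y k s) ^ 2)
      ((-l) * (Real.exp (-l * t) * (y k t) ^ 2)
        + 2 * (Real.exp (-l * t) * (y k t * y' k t))) t := by
    intro t
    have h1 : HasDerivAt (fun s : ℝ => Real.exp (-l * s)) (-l * Real.exp (-l * t)) t := by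
      have := (Real.hasDerivAt_exp (-l * t)).comp t ((hasDerivAt_id t).const_mul (-l))
      simpa [Function.comp_def, mul_comm] using this
    have h2 : HasDerivAt (fun s => (y k s) ^ 2) (2 * y k t * y' k t) t := by
      have := (hderiv k t).pow 2
      exact this.congr_deriv (by ring)
    have h3 := h1.mul h2
    exact h3.congr_deriv (by ring)
  have hIBP : (-l) * C + 2 * B = Real.exp (-l * L) * (y k L) ^ 2 := by
    have h := intervalIntegral.integral_eq_sub_of_hasDerivAt
      (f := fun s => Real.exp (-l * s) * (y k s) ^ 2) (fun t _ => hF t)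
      ((hiC.const_mul _).add (hiB.const_mul _))
    rw [intervalIntegral.integral_add (hiC.const_mul _) (hiB.const_mul _),
        intervalIntegral.integral_const_mul, intervalIntegral.integral_const_mul] at h
    rw [← hCdef, ← hBdef] at h
    simpa [hinit k] using h
  -- expand J (k-1)
  have hrow : J (k - 1) = J k + 2 * Γ * B + Γ ^ 2 * C := by
    rw [hJ (k - 1), hJ k]
    have hcongr : (∫ t in (0:ℝ)..L, Real.exp (-l * t) * (y' (k - 1) t) ^ 2)
        = ∫ t in (0:ℝ)..L, (Real.exp (-l * t) * (y' k t) ^ 2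
            + (2 * Γ) * (Real.exp (-l * t) * (y k t * y' k t))
            + Γ ^ 2 * (Real.exp (-l * t) * (y k t) ^ 2)) := by
      apply intervalIntegral.integral_congr
      intro t ht
      rw [uIcc_of_le hL.le] at ht
      have h := hrec k hk t ht
      have h2 : y' (k - 1) t = y' k t + Γ * y k t := by linarith
      simp only [h2]
      ring
    rw [hcongr, intervalIntegral.integral_add (hiA.add (hiB.const_mul _)) (hiC.const_mul _),
        intervalIntegral.integral_add hiA (hiB.const_mul _),
        intervalIntegral.integral_const_mul, intervalIntegral.integral_const_mul,
        ← hCdef, ← hBdef]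
  have key : J k - J (k - 1) = -(Γ ^ 2 + l * Γ) * C - Γ * (Real.exp (-l * L) * (y k L) ^ 2) := by
    rw [hrow]
    linear_combination (-Γ) * hIBP
  have hpos : 0 ≤ Γ * (Real.exp (-l * L) * (y k L) ^ 2) :=
    mul_nonneg hΓ.le (mul_nonneg (Real.exp_pos _).le (sq_nonneg _))
  have hcoef : 0 ≤ Γ ^ 2 + l * Γ := by positivity
  constructor
  · linarith
  · nlinarith
end

section
/- Under the hypotheses of the previous statement (scalar case, y_k(0) = 0, ẏ_k = ẏ_{k−1} − Γ y_k with Γ > 0), the L²-norm of y_k on [0,L] tends to 0 as k → ∞, i.e., lim_{k→∞} ∫_0^L y_k(t)^2 dt = 0. -/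
open Set Filter

/-- For the β = 0 ILC recursion ẏ_k = ẏ_{k−1} − Γ y_k with y_k(0) = 0 and Γ > 0,
the L²-norm of y_k on [0,L] tends to 0 as k → ∞. -/
theorem stmt_11 (L Γ : ℝ) (hL : 0 < L) (hΓ : 0 < Γ)
    (y y' : ℕ → ℝ → ℝ)
    (hderiv : ∀ k t, HasDerivAt (y k) (y' k t) t)
    (hcont : ∀ k, Continuous (y' k))
    (hinit : ∀ k, y k 0 = 0)
    (hrec : ∀ k, 1 ≤ k → ∀ t ∈ Icc (0:ℝ) L, y' k t = y' (k - 1) t - Γ * y k t) :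
    Tendsto (fun k => ∫ t in (0:ℝ)..L, (y k t) ^ 2) atTop (nhds 0) := by
  have hycont : ∀ k, Continuous (y k) := fun k =>
    continuous_iff_continuousAt.2 fun t => (hderiv k t).continuousAt
  set J : ℕ → ℝ := fun k => ∫ t in (0:ℝ)..L, (y' k t) ^ 2 with hJdef
  have hint : ∀ k, IntervalIntegrable (fun t => (y' k t) ^ 2) MeasureTheory.volume 0 L :=
    fun k => ((hcont k).pow 2).intervalIntegrable _ _
  have hyint : ∀ k, IntervalIntegrable (fun t => (y k t) ^ 2) MeasureTheory.volume 0 L :=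
    fun k => ((hycont k).pow 2).intervalIntegrable _ _
  have hyy'int : ∀ k, IntervalIntegrable (fun t => 2 * y k t * y' k t)
      MeasureTheory.volume 0 L :=
    fun k => (((continuous_const.mul (hycont k)).mul (hcont k))).intervalIntegrable _ _
  have hfund : ∀ k, (∫ t in (0:ℝ)..L, 2 * y k t * y' k t) = (y k L) ^ 2 := by
    intro k
    have h := intervalIntegral.integral_eq_sub_of_hasDerivAt
      (f := fun t => (y k t) ^ 2) (f' := fun t => 2 * y k t * y' k t)
      (fun t _ => by
        have : HasDerivAt (fun t => (y k t) ^ 2) _ t := (hderiv k t).pow 2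
        simpa [mul_comm, mul_assoc, mul_left_comm] using this)
      (hyy'int k)
    simpa [hinit k] using h
  have key : ∀ k, J k - J (k + 1)
      = Γ * (y (k + 1) L) ^ 2 + Γ ^ 2 * ∫ t in (0:ℝ)..L, (y (k + 1) t) ^ 2 := by
    intro k
    have hdiff : J k - J (k + 1)
        = ∫ t in (0:ℝ)..L, ((y' k t) ^ 2 - (y' (k + 1) t) ^ 2) :=
      (intervalIntegral.integral_sub (hint k) (hint (k + 1))).symm
    have hcongr : (∫ t in (0:ℝ)..L, ((y' k t) ^ 2 - (y' (k + 1) t) ^ 2))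
        = ∫ t in (0:ℝ)..L,
            (Γ * (2 * y (k + 1) t * y' (k + 1) t) + Γ ^ 2 * (y (k + 1) t) ^ 2) := by
      apply intervalIntegral.integral_congr
      intro t ht
      rw [uIcc_of_le hL.le] at ht
      have h1 := hrec (k + 1) (by omega) t ht
      simp only [Nat.add_sub_cancel] at h1
      show y' k t ^ 2 - y' (k + 1) t ^ 2
        = Γ * (2 * y (k + 1) t * y' (k + 1) t) + Γ ^ 2 * (y (k + 1) t) ^ 2
      rw [h1]; ring
    rw [hdiff, hcongr,
      intervalIntegral.integral_add
        (f := fun t => Γ * (2 * y (k + 1) t * y' (k + 1) t))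
        (g := fun t => Γ ^ 2 * (y (k + 1) t) ^ 2)
        ((continuous_const.mul ((continuous_const.mul (hycont (k+1))).mul
          (hcont (k+1)))).intervalIntegrable _ _)
        ((continuous_const.mul ((hycont (k+1)).pow 2)).intervalIntegrable _ _),
      intervalIntegral.integral_const_mul, intervalIntegral.integral_const_mul,
      hfund (k + 1)]
  have hstep : ∀ k, Γ ^ 2 * (∫ t in (0:ℝ)..L, (y (k + 1) t) ^ 2) ≤ J k - J (k + 1) := by
    intro k
    rw [key k]
    nlinarith [sq_nonneg (y (k + 1) L)]
  have hnonneg : ∀ k, 0 ≤ ∫ t in (0:ℝ)..L, (y k t) ^ 2 := fun k =>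
    intervalIntegral.integral_nonneg hL.le fun t _ => sq_nonneg _
  have hanti : Antitone J := by
    apply antitone_nat_of_succ_le
    intro k
    have h := hstep k
    have h2 := hnonneg (k + 1)
    nlinarith
  have hbdd : BddBelow (Set.range J) := by
    refine ⟨0, ?_⟩
    rintro _ ⟨k, rfl⟩
    exact intervalIntegral.integral_nonneg hL.le fun t _ => sq_nonneg _
  have hJtend : Tendsto J atTop (nhds (⨅ k, J k)) := tendsto_atTop_ciInf hanti hbdd
  have hJtend' : Tendsto (fun k => J (k + 1)) atTop (nhds (⨅ k, J k)) :=
    hJtend.comp (tendsto_add_atTop_nat 1)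
  have hsub : Tendsto (fun k => J k - J (k + 1)) atTop (nhds 0) := by
    simpa using hJtend.sub hJtend'
  have hdiv : Tendsto (fun k => (J k - J (k + 1)) / Γ ^ 2) atTop (nhds 0) := by
    simpa using hsub.div_const (Γ ^ 2)
  have hsq : Tendsto (fun k => ∫ t in (0:ℝ)..L, (y (k + 1) t) ^ 2) atTop (nhds 0) := by
    apply squeeze_zero (fun k => hnonneg (k + 1)) _ hdiv
    intro k
    have hΓ2 : (0:ℝ) < Γ ^ 2 := by positivity
    rw [le_div_iff₀ hΓ2]
    have h := hstep k
    linarith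
  exact (tendsto_add_atTop_iff_nat 1).mp hsq
end

section
/- Let (X, ‖·‖) be a normed space, ρ ∈ (0,1), and suppose sequences y_k ∈ X and contraction maps G_k : X → X with ratio ρ satisfy y_k = G_k(y_{k−1}) + d_k where ‖d_k‖ ≤ ρ D_1 for all k, G_k → G_∞ uniformly on a bounded set containing all y_k, and y_∞ is the fixed point of G_∞. Then limsup_{k→∞} ‖y_k − y_∞‖ ≤ ρ D_1/(1−ρ). -/
open Filter

/-- Convergence of the ILES error to the λ-norm ball: if y_k = G_k(y_{k−1}) + d_k with
‖d_k‖ ≤ ρ D₁, the G_k are ρ-contractions converging uniformly on a bounded set S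
containing all y_k and the fixed point y_∞ of G_∞, then
limsup ‖y_k − y_∞‖ ≤ ρ D₁/(1−ρ). -/
theorem stmt_15 {X : Type*} [NormedAddCommGroup X] [NormedSpace ℝ X]
    (ρ D₁ D₂ : ℝ) (hρ0 : 0 < ρ) (hρ1 : ρ < 1) (hD₁ : 0 ≤ D₁)
    (S : Set X) (hSbdd : ∀ x ∈ S, ‖x‖ ≤ D₂)
    (G : ℕ → X → X) (Ginf : X → X)
    (hcontr : ∀ k, ∀ x y : X, ‖G k x - G k y‖ ≤ ρ * ‖x - y‖)
    (hcontrinf : ∀ x y : X, ‖Ginf x - Ginf y‖ ≤ ρ * ‖x - y‖)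
    (hunif : ∀ ε > 0, ∃ N, ∀ k ≥ N, ∀ x ∈ S, ‖G k x - Ginf x‖ ≤ ε)
    (y : ℕ → X) (d : ℕ → X) (yinf : X)
    (hyS : ∀ k, y k ∈ S) (hyinfS : yinf ∈ S)
    (hrec : ∀ k, 1 ≤ k → y k = G k (y (k - 1)) + d k)
    (hd : ∀ k, ‖d k‖ ≤ ρ * D₁)
    (hfix : Ginf yinf = yinf) :
    limsup (fun k => ‖y k - yinf‖) atTop ≤ ρ * D₁ / (1 - ρ) := by
  have h1ρ : 0 < 1 - ρ := by linarith
  set a : ℕ → ℝ := fun k => ‖y k - yinf‖ with ha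
  have hanonneg : ∀ k, 0 ≤ a k := fun k => norm_nonneg _
  refine le_of_forall_pos_le_add fun δ hδ => ?_
  obtain ⟨N, hN⟩ := hunif (δ * (1 - ρ)) (by positivity)
  set c : ℝ := ρ * D₁ / (1 - ρ) + δ with hcdef
  have hc : ρ * D₁ + δ * (1 - ρ) = (1 - ρ) * c := by
    rw [hcdef]
    field_simp <;> ring
  have hc0 : 0 ≤ c := by positivity
  have step : ∀ k, N ≤ k → a (k + 1) ≤ ρ * a k + (1 - ρ) * c := by
    intro k hk
    have h1 : y (k + 1) = G (k + 1) (y k) + d (k + 1) := by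
      have := hrec (k + 1) (by omega)
      simpa using this
    have h2 : y (k + 1) - yinf
        = (G (k + 1) (y k) - Ginf (y k)) + (Ginf (y k) - Ginf yinf) + d (k + 1) := by
      rw [h1, hfix]; abel
    calc a (k + 1)
        ≤ ‖G (k + 1) (y k) - Ginf (y k)‖ + ‖Ginf (y k) - Ginf yinf‖ + ‖d (k + 1)‖ := by
          rw [ha]; simp only [h2]; exact norm_add₃_le
      _ ≤ δ * (1 - ρ) + ρ * a k + ρ * D₁ := by
          gcongr
          · exact hN (k + 1) (by omega) (y k) (hyS k)
          · exact hcontrinf _ _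
          · exact hd _
      _ = ρ * a k + (1 - ρ) * c := by rw [← hc]; ring
  have key : ∀ m, a (N + m) ≤ ρ ^ m * a N + c := by
    intro m
    induction m with
    | zero => simpa using le_add_of_nonneg_right (a := a N) hc0
    | succ m ih =>
      have h3 := step (N + m) (by omega)
      have hρm : 0 ≤ ρ ^ m := by positivity
      have : a (N + (m + 1)) = a ((N + m) + 1) := by ring_nf
      rw [this, pow_succ]
      nlinarith [hanonneg (N + m)]
  have hshift : limsup a atTop = limsup (fun m => a (m + N)) atTop :=
    (limsup_nat_add a N).symm
  rw [hshift]
  have htend : Tendsto (fun m : ℕ => ρ ^ m * a N + c) atTop (nhds c) := by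
    have := (tendsto_pow_atTop_nhds_zero_of_lt_one hρ0.le hρ1).mul_const (a N)
    simpa using this.add_const c
  calc limsup (fun m => a (m + N)) atTop
      ≤ limsup (fun m : ℕ => ρ ^ m * a N + c) atTop := by
        refine limsup_le_limsup (Eventually.of_forall fun m => ?_) ?_ ?_
        · have := key m
          rwa [add_comm N m] at this
        · exact isCoboundedUnder_le_of_le atTop fun m => hanonneg _
        · exact htend.isBoundedUnder_le
    _ = c := htend.limsup_eq
end
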